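/- Inversion for restriction: if Γ ⊢_B P ▶ T and P ≡ (νc)P', then T ≡ (νc)T' for some T' with Γ' ⊢_{B'} P' ▶ T' for some extended environment Γ' ⊇ Γ and buffer set B' ⊇ B. -/
import Mathlib


/- ===== Syntax of behavioural types (Figure 4 of the paper) ===== -/

abbrev Name := ℕ
abbrev TVar := ℕ

inductive Pre where
  | snd : Name → Pre
  | rcv : Name → Pre
  | tau : Pre
deriving DecidableEq

inductive Ty where
  | nil  : Ty
  | pre  : Pre → Ty → Ty
  | ich  : Ty → Ty → Ty                   -- internal choice ⊕
  | ech  : Pre → Ty → Pre → Ty → Ty       -- external choice & of guarded types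
  | par  : Ty → Ty → Ty
  | new  : Name → Ty → Ty                 -- (new a)T
  | cls  : Name → Ty → Ty                 -- end[a];T
  | res  : Name → Ty → Ty                 -- (νa)T
  | obuf : Name → Ty                      -- open buffer [a]°
  | cbuf : Name → Ty                      -- closed buffer [a]•
  | tvar : TVar → List Name → Ty          -- t⟨ã⟩
deriving DecidableEq

/-- A system of mutually recursive type equations: each variable is mapped
to its formal parameters and its body. -/
abbrev Defs := TVar → List Name × Ty

def Pre.fn : Pre → Finset Name
  | .snd a => {a}
  | .rcv a => {a}
  | .tau   => ∅

def Ty.fn : Ty → Finset Name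
  | .nil => ∅
  | .pre κ T => κ.fn ∪ T.fn
  | .ich T S => T.fn ∪ S.fn
  | .ech κ₁ T κ₂ S => κ₁.fn ∪ T.fn ∪ κ₂.fn ∪ S.fn
  | .par T S => T.fn ∪ S.fn
  | .new a T => T.fn.erase a
  | .cls a T => insert a T.fn
  | .res a T => T.fn.erase a
  | .obuf a => {a}
  | .cbuf a => {a}
  | .tvar _ as => as.toFinset

/-- `lookupIdx xs as n` maps the i-th formal parameter of `xs` to the i-th
actual argument of `as`, leaving other names unchanged. -/
def lookupIdx : List Name → List Name → Name → Name
  | [], _, n => n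
  | _ :: _, [], n => n
  | x :: xs, a :: as, n => if n = x then a else lookupIdx xs as n

def Pre.sub (f : Name → Name) : Pre → Pre
  | .snd a => .snd (f a)
  | .rcv a => .rcv (f a)
  | .tau   => .tau

def Ty.sub (f : Name → Name) : Ty → Ty
  | .nil => .nil
  | .pre κ T => .pre (κ.sub f) (T.sub f)
  | .ich T S => .ich (T.sub f) (S.sub f)
  | .ech κ₁ T κ₂ S => .ech (κ₁.sub f) (T.sub f) (κ₂.sub f) (S.sub f)
  | .par T S => .par (T.sub f) (S.sub f)
  | .new a T => .new (f a) (T.sub f)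
  | .cls a T => .cls (f a) (T.sub f)
  | .res a T => .res (f a) (T.sub f)
  | .obuf a => .obuf (f a)
  | .cbuf a => .cbuf (f a)
  | .tvar t as => .tvar t (as.map f)

/-- Instantiation of the body of the equation for `t` with actual arguments `as`. -/
def instTy (D : Defs) (t : TVar) (as : List Name) : Ty :=
  (D t).2.sub (lookupIdx (D t).1 as)
/- ===== Labels, structural congruence and LTS semantics (Figure 5) ===== -/

inductive Lab where
  | snd : Name → Lab      -- ā
  | rcv : Name → Lab      -- a
  | tau : Lab
  | sync : Name → Lab     -- [a]
  | cls : Name → Lab      -- close request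
  | clsd : Name → Lab     -- close acceptance
  | csnd : Name → Lab     -- send from closed channel
deriving DecidableEq

def Lab.fn : Lab → Finset Name
  | .snd a => {a}
  | .rcv a => {a}
  | .tau => ∅
  | .sync a => {a}
  | .cls a => {a}
  | .clsd a => {a}
  | .csnd a => {a}

inductive Cong : Ty → Ty → Prop where
  | refl (T) : Cong T T
  | symm : Cong T S → Cong S T
  | trans : Cong T S → Cong S U → Cong T U
  | parComm : Cong (.par T S) (.par S T)
  | parAssoc : Cong (.par T (.par S U)) (.par (.par T S) U)
  | parNil : Cong (.par T .nil) T
  | resSwap : Cong (.res a (.res b T)) (.res b (.res a T))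
  | resNil : Cong (.res a .nil) .nil
  | resCBuf : Cong (.res a (.cbuf a)) .nil
  | resOBuf : Cong (.res a (.obuf a)) .nil
  | scope : a ∉ Ty.fn T → Cong (.par T (.res a S)) (.res a (.par T S))
  | parCong : Cong T T' → Cong S S' → Cong (.par T S) (.par T' S')
  | resCong : Cong T T' → Cong (.res a T) (.res a T')

inductive Step (D : Defs) : Ty → Lab → Ty → Prop where
  | snd : Step D (.pre (.snd a) T) (.snd a) T
  | rcv : Step D (.pre (.rcv a) T) (.rcv a) T
  | tau : Step D (.pre .tau T) .tau T
  | sel1 : Step D (.ich T S) .tau T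
  | sel2 : Step D (.ich T S) .tau S
  | bra1 : Step D (.pre κ₁ T) α T' → Step D (.ech κ₁ T κ₂ S) α T'
  | bra2 : Step D (.pre κ₂ S) α S' → Step D (.ech κ₁ T κ₂ S) α S'
  | parL : Step D T α T' → Step D (.par T S) α (.par T' S)
  | parR : Step D S α S' → Step D (.par T S) α (.par T S')
  | comL : Step D T (.snd a) T' → Step D S (.rcv a) S' →
      Step D (.par T S) (.sync a) (.par T' S')
  | comR : Step D T (.rcv a) T' → Step D S (.snd a) S' →
      Step D (.par T S) (.sync a) (.par T' S')
  | comCL : Step D T (.csnd a) T' → Step D S (.rcv a) S' →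
      Step D (.par T S) (.sync a) (.par T' S')
  | comCR : Step D T (.rcv a) T' → Step D S (.csnd a) S' →
      Step D (.par T S) (.sync a) (.par T' S')
  | new : Step D (.new a T) .tau (.res a (.par T (.obuf a)))
  | fin : Step D (.cls a T) (.cls a) T
  | buf : Step D (.obuf a) (.clsd a) (.cbuf a)
  | cld : Step D (.cbuf a) (.csnd a) (.cbuf a)
  | closeL : Step D T (.cls a) T' → Step D S (.clsd a) S' →
      Step D (.par T S) .tau (.par T' S')
  | closeR : Step D T (.clsd a) T' → Step D S (.cls a) S' →
      Step D (.par T S) .tau (.par T' S')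
  | res1 : Step D T α T' → Lab.fn α ≠ {a} → Step D (.res a T) α (.res a T')
  | res2 : Step D T (.sync a) T' → Step D (.res a T) .tau (.res a T')
  | eq : Cong T T' → Step D T α T'' → Step D T' α T''
  | defU : Step D (instTy D t as) α T' → Step D (.tvar t as) α T'
/- ===== MiGo processes (Figure 1) and the typing system (Figure 4) ===== -/

inductive Expr where
  | val : ℕ → Expr
  | evar : ℕ → Expr
  | esucc : Expr → Expr
deriving DecidableEq

inductive Eval : Expr → ℕ → Prop where
  | val : Eval (.val n) n
  | succ : Eval e n → Eval (.esucc e) (n + 1)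

inductive Proc where
  | nil : Proc
  | snd : Name → Expr → Proc → Proc        -- u!⟨e⟩;P
  | rcv : Name → ℕ → Proc → Proc           -- u?(x);P
  | ptau : Proc → Proc                     -- τ;P
  | close : Name → Proc → Proc             -- close u;P
  | sel : Proc → Proc → Proc               -- select between two guarded processes
  | ite : Expr → Proc → Proc → Proc        -- if e then P else Q
  | newc : Name → Proc → Proc              -- new channel
  | par : Proc → Proc → Proc
  | call : ℕ → List Expr → List Name → Proc -- X⟨ẽ, ũ⟩
  | resP : Name → Proc → Proc              -- (νc)P
  | buf : Name → Proc                      -- open (empty, synchronous) buffer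
  | cbufP : Name → Proc                    -- closed buffer
deriving DecidableEq

/-- Process definitions: value parameters, channel parameters, body. -/
abbrev PDefs := ℕ → List ℕ × List Name × Proc

def Expr.vsub (x v : ℕ) : Expr → Expr
  | .val n => .val n
  | .evar y => if y = x then .val v else .evar y
  | .esucc e => .esucc (e.vsub x v)

def Proc.vsub (x v : ℕ) : Proc → Proc
  | .nil => .nil
  | .snd c e P => .snd c (e.vsub x v) (P.vsub x v)
  | .rcv c y P => if y = x then .rcv c y P else .rcv c y (P.vsub x v)
  | .ptau P => .ptau (P.vsub x v)
  | .close c P => .close c (P.vsub x v)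
  | .sel P Q => .sel (P.vsub x v) (Q.vsub x v)
  | .ite e P Q => .ite (e.vsub x v) (P.vsub x v) (Q.vsub x v)
  | .newc y P => .newc y (P.vsub x v)
  | .par P Q => .par (P.vsub x v) (Q.vsub x v)
  | .call X es cs => .call X (es.map (Expr.vsub x v)) cs
  | .resP c P => .resP c (P.vsub x v)
  | .buf c => .buf c
  | .cbufP c => .cbufP c

def Proc.csub (f : Name → Name) : Proc → Proc
  | .nil => .nil
  | .snd c e P => .snd (f c) e (P.csub f)
  | .rcv c y P => .rcv (f c) y (P.csub f)
  | .ptau P => .ptau (P.csub f)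
  | .close c P => .close (f c) (P.csub f)
  | .sel P Q => .sel (P.csub f) (Q.csub f)
  | .ite e P Q => .ite e (P.csub f) (Q.csub f)
  | .newc y P => .newc (f y) (P.csub f)
  | .par P Q => .par (P.csub f) (Q.csub f)
  | .call X es cs => .call X es (cs.map f)
  | .resP c P => .resP (f c) (P.csub f)
  | .buf c => .buf (f c)
  | .cbufP c => .cbufP (f c)

def Proc.vsubs : List ℕ → List ℕ → Proc → Proc
  | [], _, P => P
  | _ :: _, [], P => P
  | x :: xs, v :: vs, P => Proc.vsubs xs vs (P.vsub x v)

/-- Instantiation of the body of definition `X` with values `vs` and channels `cs`. -/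
def instP (D : PDefs) (X : ℕ) (vs : List ℕ) (cs : List Name) : Proc :=
  Proc.csub (lookupIdx (D X).2.1 cs) (Proc.vsubs (D X).1 vs (D X).2.2)

def Proc.pfn : Proc → Finset Name
  | .nil => ∅
  | .snd c _ P => insert c P.pfn
  | .rcv c _ P => insert c P.pfn
  | .ptau P => P.pfn
  | .close c P => insert c P.pfn
  | .sel P Q => P.pfn ∪ Q.pfn
  | .ite _ P Q => P.pfn ∪ Q.pfn
  | .newc y P => P.pfn.erase y
  | .par P Q => P.pfn ∪ Q.pfn
  | .call _ _ cs => cs.toFinset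
  | .resP c P => P.pfn.erase c
  | .buf c => {c}
  | .cbufP c => {c}

/-- Structural congruence on processes. -/
inductive PCong : Proc → Proc → Prop where
  | refl (P) : PCong P P
  | symm : PCong P Q → PCong Q P
  | trans : PCong P Q → PCong Q R → PCong P R
  | parComm : PCong (.par P Q) (.par Q P)
  | parAssoc : PCong (.par P (.par Q R)) (.par (.par P Q) R)
  | parNil : PCong (.par P .nil) P
  | resSwap : PCong (.resP c (.resP d P)) (.resP d (.resP c P))
  | resNil : PCong (.resP c .nil) .nil
  | resBuf : PCong (.resP c (.buf c)) .nil
  | resCBuf : PCong (.resP c (.cbufP c)) .nil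
  | scope : c ∉ Proc.pfn P → PCong (.par P (.resP c Q)) (.resP c (.par P Q))
  | parCong : PCong P P' → PCong Q Q' → PCong (.par P Q) (.par P' Q')
  | resCong : PCong P Q → PCong (.resP c P) (.resP c Q)

/-- The (runtime) typing judgement `Γ ⊢_B P ▶ T` of Figure 4 (with a single
payload type, so the environment `Γ` is left implicit); `B` is the set of
channels with active buffers. -/
inductive Typed : Finset Name → Proc → Ty → Prop where
  | nil : Typed ∅ .nil .nil
  | snd : Typed ∅ P T → Typed ∅ (.snd c e P) (.pre (.snd c) T)
  | rcv : Typed ∅ P T → Typed ∅ (.rcv c x P) (.pre (.rcv c) T)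
  | ptau : Typed ∅ P T → Typed ∅ (.ptau P) (.pre .tau T)
  | close : Typed ∅ P T → Typed ∅ (.close c P) (.cls c T)
  | sel : Typed ∅ g₁ (.pre κ₁ T₁) → Typed ∅ g₂ (.pre κ₂ T₂) →
      Typed ∅ (.sel g₁ g₂) (.ech κ₁ T₁ κ₂ T₂)
  | ite : Typed ∅ P S → Typed ∅ Q T → Typed ∅ (.ite e P Q) (.ich S T)
  | newc : Typed ∅ P T → Typed ∅ (.newc y P) (.new y T)
  | callP : Typed ∅ (.call X es cs) (.tvar X cs)
  | par : Typed B₁ P T → Typed B₂ Q S → Disjoint B₁ B₂ →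
      Typed (B₁ ∪ B₂) (.par P Q) (.par T S)
  | res : Typed B P T → Typed (B.erase c) (.resP c P) (.res c T)
  | buf : Typed {c} (.buf c) (.obuf c)
  | cbuf : Typed {c} (.cbufP c) (.cbuf c)

lemma typed_sub {B : Finset Name} {P : Proc} {T : Ty} (h : Typed B P T) :
    Ty.fn T ⊆ Proc.pfn P ∧ B ⊆ Ty.fn T := by
  induction h with
  | nil => simp [Ty.fn, Proc.pfn]
  | snd _ ih =>
    refine ⟨fun x hx => ?_, by simp⟩
    simp only [Ty.fn, Pre.fn, Finset.mem_union, Finset.mem_singleton] at hx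
    simp only [Proc.pfn, Finset.mem_insert]
    exact hx.imp id (fun h => ih.1 h)
  | rcv _ ih =>
    refine ⟨fun x hx => ?_, by simp⟩
    simp only [Ty.fn, Pre.fn, Finset.mem_union, Finset.mem_singleton] at hx
    simp only [Proc.pfn, Finset.mem_insert]
    exact hx.imp id (fun h => ih.1 h)
  | ptau _ ih =>
    refine ⟨fun x hx => ?_, by simp⟩
    simp only [Ty.fn, Pre.fn, Finset.mem_union, Finset.notMem_empty, false_or] at hx
    exact ih.1 hx
  | close _ ih =>
    refine ⟨fun x hx => ?_, by simp⟩
    simp only [Ty.fn, Finset.mem_insert] at hx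
    simp only [Proc.pfn, Finset.mem_insert]
    exact hx.imp id (fun h => ih.1 h)
  | sel _ _ ih1 ih2 =>
    refine ⟨fun x hx => ?_, by simp⟩
    simp only [Ty.fn, Finset.mem_union] at hx
    simp only [Proc.pfn, Finset.mem_union]
    rcases hx with ((hx | hx) | hx) | hx
    · exact Or.inl (ih1.1 (by simp [Ty.fn, Finset.mem_union]; exact Or.inl hx))
    · exact Or.inl (ih1.1 (by simp [Ty.fn, Finset.mem_union]; exact Or.inr hx))
    · exact Or.inr (ih2.1 (by simp [Ty.fn, Finset.mem_union]; exact Or.inl hx))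
    · exact Or.inr (ih2.1 (by simp [Ty.fn, Finset.mem_union]; exact Or.inr hx))
  | ite _ _ ih1 ih2 =>
    refine ⟨fun x hx => ?_, by simp⟩
    simp only [Ty.fn, Finset.mem_union] at hx
    simp only [Proc.pfn, Finset.mem_union]
    exact hx.imp (fun h => ih1.1 h) (fun h => ih2.1 h)
  | newc _ ih =>
    refine ⟨fun x hx => ?_, by simp⟩
    simp only [Ty.fn, Finset.mem_erase] at hx
    simp only [Proc.pfn, Finset.mem_erase]
    exact ⟨hx.1, ih.1 hx.2⟩
  | callP => exact ⟨by simp [Ty.fn, Proc.pfn], by simp⟩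
  | par _ _ _ ih1 ih2 =>
    constructor
    · intro x hx
      simp only [Ty.fn, Finset.mem_union] at hx
      simp only [Proc.pfn, Finset.mem_union]
      exact hx.imp (fun h => ih1.1 h) (fun h => ih2.1 h)
    · intro x hx
      simp only [Finset.mem_union] at hx
      simp only [Ty.fn, Finset.mem_union]
      exact hx.imp (fun h => ih1.2 h) (fun h => ih2.2 h)
  | res _ ih =>
    constructor
    · intro x hx
      simp only [Ty.fn, Finset.mem_erase] at hx
      simp only [Proc.pfn, Finset.mem_erase]
      exact ⟨hx.1, ih.1 hx.2⟩
    · intro x hx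
      simp only [Finset.mem_erase] at hx
      simp only [Ty.fn, Finset.mem_erase]
      exact ⟨hx.1, ih.2 hx.2⟩
  | buf => exact ⟨by simp [Ty.fn, Proc.pfn], by simp [Ty.fn]⟩
  | cbuf => exact ⟨by simp [Ty.fn, Proc.pfn], by simp [Ty.fn]⟩

lemma subj_cong {P Q : Proc} (hpc : PCong P Q) :
    (∀ B T, Typed B P T → ∃ T', Cong T T' ∧ Typed B Q T') ∧
    (∀ B T, Typed B Q T → ∃ T', Cong T T' ∧ Typed B P T') := by
  induction hpc with
  | refl P => exact ⟨fun B T h => ⟨T, .refl T, h⟩, fun B T h => ⟨T, .refl T, h⟩⟩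
  | symm _ ih => exact ⟨ih.2, ih.1⟩
  | trans _ _ ih1 ih2 =>
    refine ⟨fun B T h => ?_, fun B T h => ?_⟩
    · obtain ⟨T1, hc1, h1⟩ := ih1.1 B T h
      obtain ⟨T2, hc2, h2⟩ := ih2.1 B T1 h1
      exact ⟨T2, hc1.trans hc2, h2⟩
    · obtain ⟨T1, hc1, h1⟩ := ih2.2 B T h
      obtain ⟨T2, hc2, h2⟩ := ih1.2 B T1 h1
      exact ⟨T2, hc1.trans hc2, h2⟩
  | parComm =>
    refine ⟨fun B T h => ?_, fun B T h => ?_⟩ <;>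
    · cases h with
      | par h1 h2 hd =>
        exact ⟨_, .parComm, by rw [Finset.union_comm]; exact .par h2 h1 hd.symm⟩
  | parAssoc =>
    refine ⟨fun B T h => ?_, fun B T h => ?_⟩
    · cases h with
      | par h1 h2 hd =>
        cases h2 with
        | par h2 h3 hd' =>
          rw [Finset.disjoint_union_right] at hd
          refine ⟨_, .parAssoc, ?_⟩
          rw [← Finset.union_assoc]
          exact .par (.par h1 h2 hd.1) h3 (by
            rw [Finset.disjoint_union_left]; exact ⟨hd.2, hd'⟩)
    · cases h with
      | par h1 h2 hd =>
        cases h1 with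
        | par h1 h1' hd' =>
          rw [Finset.disjoint_union_left] at hd
          refine ⟨_, .symm .parAssoc, ?_⟩
          rw [Finset.union_assoc]
          exact .par h1 (.par h1' h2 hd.2) (by
            rw [Finset.disjoint_union_right]; exact ⟨hd', hd.1⟩)
  | parNil =>
    refine ⟨fun B T h => ?_, fun B T h => ?_⟩
    · cases h with
      | par h1 h2 hd => cases h2; exact ⟨_, .parNil, by simpa using h1⟩
    · exact ⟨_, .symm .parNil, by simpa using Typed.par h .nil (Finset.disjoint_empty_right _)⟩
  | resSwap =>
    refine ⟨fun B T h => ?_, fun B T h => ?_⟩ <;>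
    · cases h with
      | res h =>
        cases h with
        | res h =>
          exact ⟨_, .resSwap, by rw [Finset.erase_right_comm]; exact .res (.res h)⟩
  | resNil =>
    refine ⟨fun B T h => ?_, fun B T h => ?_⟩
    · cases h with
      | res h => cases h; exact ⟨_, .resNil, by simpa using Typed.nil⟩
    · cases h; exact ⟨_, .symm .resNil, by simpa using Typed.res (c := _) .nil⟩
  | @resBuf c =>
    refine ⟨fun B T h => ?_, fun B T h => ?_⟩
    · cases h with
      | res h => cases h; exact ⟨_, .resOBuf, by simpa using Typed.nil⟩
    · cases h; exact ⟨_, .symm .resOBuf, by simpa using Typed.res (c := c) (Typed.buf (c := c))⟩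
  | @resCBuf c =>
    refine ⟨fun B T h => ?_, fun B T h => ?_⟩
    · cases h with
      | res h => cases h; exact ⟨_, .resCBuf, by simpa using Typed.nil⟩
    · cases h; exact ⟨_, .symm .resCBuf, by simpa using Typed.res (c := c) (Typed.cbuf (c := c))⟩
  | @scope P c Q hcP =>
    refine ⟨fun B T h => ?_, fun B T h => ?_⟩
    · cases h with
      | @par B₁ P₁ T₁ B₂' Q₂ T₂ h1 h2 hd =>
        cases h2 with
        | @res B₂ _ _ _ h2 =>
          have hcT : c ∉ Ty.fn T₁ := fun hx => hcP ((typed_sub h1).1 hx)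
          have hcB : c ∉ B₁ := fun hx => hcT ((typed_sub h1).2 hx)
          have hd' : Disjoint B₁ B₂ := by
            rw [Finset.disjoint_left] at hd ⊢
            intro x hx hx2
            exact hd hx (Finset.mem_erase.2 ⟨fun h => hcB (h ▸ hx), hx2⟩)
          refine ⟨_, .scope hcT, ?_⟩
          have : B₁ ∪ B₂.erase c = (B₁ ∪ B₂).erase c := by
            rw [Finset.erase_union_distrib, Finset.erase_eq_of_notMem hcB]
          rw [this]
          exact .res (.par h1 h2 hd')
    · cases h with
      | res h =>
        cases h with
        | @par B₁ P₁ T₁ B₂ Q₂ T₂ h1 h2 hd =>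
          have hcT : c ∉ Ty.fn T₁ := fun hx => hcP ((typed_sub h1).1 hx)
          have hcB : c ∉ B₁ := fun hx => hcT ((typed_sub h1).2 hx)
          refine ⟨_, .symm (.scope hcT), ?_⟩
          have : (B₁ ∪ B₂).erase c = B₁ ∪ B₂.erase c := by
            rw [Finset.erase_union_distrib, Finset.erase_eq_of_notMem hcB]
          rw [this]
          exact .par h1 (.res h2) (hd.mono_right (Finset.erase_subset _ _))
  | parCong _ _ ih1 ih2 =>
    refine ⟨fun B T h => ?_, fun B T h => ?_⟩ <;>
    · cases h with
      | par h1 h2 hd =>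
        first
        | (obtain ⟨T1, hc1, hh1⟩ := ih1.1 _ _ h1
           obtain ⟨T2, hc2, hh2⟩ := ih2.1 _ _ h2
           exact ⟨_, .parCong hc1 hc2, .par hh1 hh2 hd⟩)
        | (obtain ⟨T1, hc1, hh1⟩ := ih1.2 _ _ h1
           obtain ⟨T2, hc2, hh2⟩ := ih2.2 _ _ h2
           exact ⟨_, .parCong hc1 hc2, .par hh1 hh2 hd⟩)
  | resCong _ ih =>
    refine ⟨fun B T h => ?_, fun B T h => ?_⟩ <;>
    · cases h with
      | res h =>
        first
        | (obtain ⟨T1, hc1, hh1⟩ := ih.1 _ _ h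
           exact ⟨_, .resCong hc1, .res hh1⟩)
        | (obtain ⟨T1, hc1, hh1⟩ := ih.2 _ _ h
           exact ⟨_, .resCong hc1, .res hh1⟩)

/-- Lemma A.7(1) (Inversion for restriction): if `Γ ⊢_B P ▶ T` and
`P ≡ (νc)P'`, then `T ≡ (νc)T'` for some `T'` typing `P'` with a buffer set
`B' ⊇ B`. -/
theorem inversion_res {B : Finset Name} {P P' : Proc} {T : Ty} {c : Name}
    (h : Typed B P T) (hc : PCong P (.resP c P')) :
    ∃ (T' : Ty) (B' : Finset Name), B ⊆ B' ∧ Cong T (.res c T') ∧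
      Typed B' P' T' := by
  obtain ⟨T1, hc1, h1⟩ := (subj_cong hc).1 B T h
  cases h1 with
  | @res B' _ _ _ h' =>
    exact ⟨_, B', Finset.erase_subset _ _, hc1, h'⟩
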